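/- Under exactly the hypotheses of Theorem 1 — fix N ≥ 2, m ≥ 1, dimensions n_1,…,n_N ≥ 1, matrices A_i ∈ ℝ^{m×n_i}, b ∈ ℝ^m, convex f_i : ℝ^{n_i} → ℝ, ρ > 0, 0 < γ < 2, Δ > 0, symmetric P_i with P_i − ρ(N/(2−γ) − 1)‖A_i‖²·I positive semidefinite; a pair (x*, λ*) with Σ_i A_i x_i* = b and L(x, λ*) ≥ L(x*, λ*) for all x; and sequences x_i^{[k]}, λ̂^{[k]}, d̂^{[k]} satisfying (i) ‖d̂^{[k]} − (Σ_i A_i x_i^{[k]} − b)‖ ≤ 2√m·Δ, (ii) λ̂^{[k+1]} = λ̂^{[k]} + γρ·d̂^{[k+1]}, (iii) for each i there is a subgradient g_i of f_i at x_i^{[k+1]} with g_i + A_iᵀλ̂^{[k]} + ρ·A_iᵀ(A_i(x_i^{[k+1]} − x_i^{[k]}) + d̂^{[k]}) + P_i(x_i^{[k+1]} − x_i^{[k]}) = 0, and (iv) ‖λ̂^{[k]} − λ*‖ ≤ M_λ, ‖d̂^{[k]}‖ ≤ M_x — set ε_i := (2−γ)/N. Then for every K ≥ 1: (1/K) Σ_{k=1}^K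 ½ Σ_{i=1}^N ‖x_i^{[k]} − x_i^{[k+1]}‖²_{ ρA_iᵀA_i + P_i − (ρ/ε_i)A_iᵀA_i } ≤ C/K + E_Δ, where C := ½ Σ_i ‖x_i^{[1]} − x_i*‖²_{ρA_iᵀA_i + P_i} + (1/(2γρ))·‖λ̂^{[1]} − λ*‖² and E_Δ := (8/γ + 4|γ−1|/γ + 2)·√m·Δ·M_λ + 4ρ√m·Δ·M_x. -/

import Mathlib

open scoped RealInnerProductSpace

/-- Weighted squared seminorm `‖v‖²_M := vᵀ M v`. -/
noncomputable def wnormSq {k : ℕ} (M : Matrix (Fin k) (Fin k) ℝ)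
    (v : EuclideanSpace ℝ (Fin k)) : ℝ :=
  dotProduct v (M.mulVec v)

/-- The spectral (ℓ²-operator) norm of a real matrix. -/
noncomputable def specNorm {m k : ℕ} (A : Matrix (Fin m) (Fin k) ℝ) : ℝ :=
  ‖LinearMap.toContinuousLinearMap (Matrix.toEuclideanLin A)‖

/-- The Lagrangian `L(x, λ) := ∑_i f_i(x_i) + ⟨λ, ∑_i A_i x_i − b⟩`. -/
noncomputable def Lag {N m : ℕ} {n : Fin N → ℕ}
    (f : ∀ i, EuclideanSpace ℝ (Fin (n i)) → ℝ)
    (A : ∀ i, Matrix (Fin m) (Fin (n i)) ℝ) (b : EuclideanSpace ℝ (Fin m))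
    (x : ∀ i, EuclideanSpace ℝ (Fin (n i))) (lam : EuclideanSpace ℝ (Fin m)) : ℝ :=
  (∑ i, f i (x i))
    + ⟪lam, (∑ i, (show EuclideanSpace ℝ (Fin m) from WithLp.toLp 2 ((A i).mulVec (x i)))) - b⟫

/-- The gradient of the smooth part of the local proximal subproblem,
`Aᵀλ̂ + ρ·Aᵀ(A(xp − x) + d̂) + P(xp − x)`. -/
noncomputable def gradTerm {m k : ℕ} (A : Matrix (Fin m) (Fin k) ℝ)
    (P : Matrix (Fin k) (Fin k) ℝ) (ρ : ℝ)
    (lamHat dHat : EuclideanSpace ℝ (Fin m))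
    (x xp : EuclideanSpace ℝ (Fin k)) : EuclideanSpace ℝ (Fin k) :=
  WithLp.toLp 2 (A.transpose.mulVec lamHat
    + ρ • A.transpose.mulVec
        ((show EuclideanSpace ℝ (Fin m) from WithLp.toLp 2 (A.mulVec (xp - x))) + dHat)
    + P.mulVec (xp - x))



section helpers

variable {k m : ℕ}

lemma dotP_inner (v w : EuclideanSpace ℝ (Fin k)) :
    dotProduct (v : Fin k → ℝ) w = ⟪v, w⟫ := by
  simp [dotProduct, PiLp.inner_apply, RCLike.inner_apply, mul_comm]

noncomputable def qf (M : Matrix (Fin k) (Fin k) ℝ) (v w : EuclideanSpace ℝ (Fin k)) : ℝ :=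
  dotProduct (v : Fin k → ℝ) (M.mulVec w)

-- Euclidean-level mulVec algebra
lemma emulVec_sub (A : Matrix (Fin m) (Fin k) ℝ) (a b : EuclideanSpace ℝ (Fin k)) :
    (show EuclideanSpace ℝ (Fin m) from WithLp.toLp 2 (A.mulVec (a - b)))
      = (show EuclideanSpace ℝ (Fin m) from WithLp.toLp 2 (A.mulVec a))
        - (show EuclideanSpace ℝ (Fin m) from WithLp.toLp 2 (A.mulVec b)) := by
  exact congrArg (WithLp.toLp 2) (Matrix.mulVec_sub A a b)

lemma emulVec_add (A : Matrix (Fin m) (Fin k) ℝ) (a b : EuclideanSpace ℝ (Fin k)) :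
    (show EuclideanSpace ℝ (Fin m) from WithLp.toLp 2 (A.mulVec (a + b)))
      = (show EuclideanSpace ℝ (Fin m) from WithLp.toLp 2 (A.mulVec a))
        + (show EuclideanSpace ℝ (Fin m) from WithLp.toLp 2 (A.mulVec b)) := by
  exact congrArg (WithLp.toLp 2) (Matrix.mulVec_add A a b)

lemma inner_mulVec_right (A : Matrix (Fin m) (Fin k) ℝ)
    (y : EuclideanSpace ℝ (Fin m)) (w : EuclideanSpace ℝ (Fin k)) :
    ⟪y, (show EuclideanSpace ℝ (Fin m) from WithLp.toLp 2 (A.mulVec w))⟫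
      = ⟪(show EuclideanSpace ℝ (Fin k) from WithLp.toLp 2 (A.transpose.mulVec y)), w⟫ := by
  rw [← dotP_inner, ← dotP_inner]
  change dotProduct y.ofLp (A.mulVec w.ofLp) = dotProduct (A.transpose.mulVec y.ofLp) w.ofLp
  rw [Matrix.dotProduct_mulVec, Matrix.mulVec_transpose]



lemma wnormSq_eq_qf (M : Matrix (Fin k) (Fin k) ℝ) (v : EuclideanSpace ℝ (Fin k)) :
    wnormSq M v = qf M v v := rfl

lemma qf_sub_left (M : Matrix (Fin k) (Fin k) ℝ) (a b c : EuclideanSpace ℝ (Fin k)) :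
    qf M (a - b) c = qf M a c - qf M b c := by
  unfold qf
  rw [show ((a - b : EuclideanSpace ℝ (Fin k)) : Fin k → ℝ) = (a : Fin k → ℝ) - b from rfl]
  exact sub_dotProduct _ _ _

lemma qf_sub_right (M : Matrix (Fin k) (Fin k) ℝ) (a b c : EuclideanSpace ℝ (Fin k)) :
    qf M a (b - c) = qf M a b - qf M a c := by
  unfold qf
  rw [show ((b - c : EuclideanSpace ℝ (Fin k)) : Fin k → ℝ) = (b : Fin k → ℝ) - c from rfl,
    Matrix.mulVec_sub]
  exact dotProduct_sub _ _ _

lemma qf_symm {M : Matrix (Fin k) (Fin k) ℝ} (hM : M.IsSymm) (a b : EuclideanSpace ℝ (Fin k)) :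
    qf M a b = qf M b a := by
  unfold qf
  rw [Matrix.dotProduct_mulVec, ← Matrix.mulVec_transpose, hM, dotProduct_comm]


lemma inner_tmulVec (A : Matrix (Fin m) (Fin k) ℝ)
    (y : EuclideanSpace ℝ (Fin m)) (w : EuclideanSpace ℝ (Fin k)) :
    ⟪(show EuclideanSpace ℝ (Fin k) from WithLp.toLp 2 (A.transpose.mulVec y)), w⟫
      = ⟪y, (show EuclideanSpace ℝ (Fin m) from WithLp.toLp 2 (A.mulVec w))⟫ :=
  (inner_mulVec_right A y w).symm

lemma inner_PmulVec {P : Matrix (Fin k) (Fin k) ℝ} (hP : P.IsSymm)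
    (v w : EuclideanSpace ℝ (Fin k)) :
    ⟪(show EuclideanSpace ℝ (Fin k) from WithLp.toLp 2 (P.mulVec v)), w⟫ = qf P v w := by
  rw [← dotP_inner, dotProduct_comm]
  exact qf_symm hP w v

lemma qf_Madd (M M' : Matrix (Fin k) (Fin k) ℝ) (v w : EuclideanSpace ℝ (Fin k)) :
    qf (M + M') v w = qf M v w + qf M' v w := by
  unfold qf
  rw [Matrix.add_mulVec]
  exact dotProduct_add _ _ _

lemma qf_Msmul (c : ℝ) (M : Matrix (Fin k) (Fin k) ℝ) (v w : EuclideanSpace ℝ (Fin k)) :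
    qf (c • M) v w = c * qf M v w := by
  unfold qf
  rw [Matrix.smul_mulVec]
  exact dotProduct_smul _ _ _

lemma qf_tmul (A : Matrix (Fin m) (Fin k) ℝ) (v w : EuclideanSpace ℝ (Fin k)) :
    qf (A.transpose * A) v w
      = ⟪(show EuclideanSpace ℝ (Fin m) from WithLp.toLp 2 (A.mulVec v)),
          (show EuclideanSpace ℝ (Fin m) from WithLp.toLp 2 (A.mulVec w))⟫ := by
  unfold qf
  rw [← Matrix.mulVec_mulVec, Matrix.dotProduct_mulVec, Matrix.vecMul_transpose]
  exact dotP_inner (WithLp.toLp 2 _) (WithLp.toLp 2 _)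

lemma qf_three_point {M : Matrix (Fin k) (Fin k) ℝ} (hM : M.IsSymm)
    (u v w : EuclideanSpace ℝ (Fin k)) :
    qf M (u - v) (u - w)
      = (1/2) * (wnormSq M (u - v) + wnormSq M (u - w) - wnormSq M (v - w)) := by
  have h1 : v - w = (u - w) - (u - v) := by abel
  simp only [wnormSq_eq_qf, h1, qf_sub_left, qf_sub_right]
  rw [qf_symm hM v u, qf_symm hM w u, qf_symm hM w v]
  ring

lemma wnormSq_add (M M' : Matrix (Fin k) (Fin k) ℝ) (v : EuclideanSpace ℝ (Fin k)) :
    wnormSq (M + M') v = wnormSq M v + wnormSq M' v := by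
  rw [wnormSq_eq_qf, wnormSq_eq_qf, wnormSq_eq_qf, qf_Madd]

lemma wnormSq_sub (M M' : Matrix (Fin k) (Fin k) ℝ) (v : EuclideanSpace ℝ (Fin k)) :
    wnormSq (M - M') v = wnormSq M v - wnormSq M' v := by
  unfold wnormSq
  rw [Matrix.sub_mulVec]
  exact dotProduct_sub _ _ _

lemma wnormSq_smul (c : ℝ) (M : Matrix (Fin k) (Fin k) ℝ) (v : EuclideanSpace ℝ (Fin k)) :
    wnormSq (c • M) v = c * wnormSq M v := by
  rw [wnormSq_eq_qf, wnormSq_eq_qf, qf_Msmul]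

lemma wnormSq_tmul (A : Matrix (Fin m) (Fin k) ℝ) (v : EuclideanSpace ℝ (Fin k)) :
    wnormSq (A.transpose * A) v
      = ‖(show EuclideanSpace ℝ (Fin m) from WithLp.toLp 2 (A.mulVec v))‖ ^ 2 := by
  rw [wnormSq_eq_qf, qf_tmul]
  exact real_inner_self_eq_norm_sq _

lemma wnormSq_neg (M : Matrix (Fin k) (Fin k) ℝ) (a b : EuclideanSpace ℝ (Fin k)) :
    wnormSq M (a - b) = wnormSq M (b - a) := by
  have h : (a - b : EuclideanSpace ℝ (Fin k)) = (0 : EuclideanSpace ℝ (Fin k)) - (b - a) := by abel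
  have z1 : ∀ v : EuclideanSpace ℝ (Fin k), qf M 0 v = 0 := by
    intro v
    unfold qf
    exact zero_dotProduct _
  have z2 : ∀ v : EuclideanSpace ℝ (Fin k), qf M v 0 = 0 := by
    intro v
    unfold qf
    rw [show ((0 : EuclideanSpace ℝ (Fin k)) : Fin k → ℝ) = (0 : Fin k → ℝ) from rfl,
      Matrix.mulVec_zero]
    exact dotProduct_zero _
  rw [wnormSq_eq_qf, h, wnormSq_eq_qf]
  simp only [qf_sub_left, qf_sub_right, z1, z2]
  ring

lemma young_inner {E : Type*} [NormedAddCommGroup E] [InnerProductSpace ℝ E]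
    (a b : E) {α : ℝ} (hα : 0 < α) :
    ⟪a, b⟫ ≤ 1/2 * (1/α) * ‖a‖^2 + α/2 * ‖b‖^2 := by
  have h := real_inner_le_norm a b
  have h2 : 0 ≤ (‖a‖ - α * ‖b‖)^2 := sq_nonneg _
  have key : 1/2 * (1/α) * ‖a‖^2 + α/2 * ‖b‖^2 - ‖a‖ * ‖b‖ = (‖a‖ - α * ‖b‖)^2/(2*α) := by
    field_simp
    ring
  nlinarith [div_nonneg h2 (by positivity : (0:ℝ) ≤ 2*α)]

lemma inner_self_diff {E : Type*} [NormedAddCommGroup E] [InnerProductSpace ℝ E] (a b : E) :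
    ⟪a, b - a⟫ = (1/2) * (‖b‖^2 - ‖a‖^2 - ‖b - a‖^2) := by
  have h := norm_sub_sq_real b a
  have h2 : ⟪a, b - a⟫ = ⟪a, b⟫ - ‖a‖^2 := by
    rw [inner_sub_right, real_inner_self_eq_norm_sq]
  rw [real_inner_comm a b] at h
  linarith

lemma telescope (g : ℕ → ℝ) (K : ℕ) :
    ∑ k ∈ Finset.Icc 1 K, (g k - g (k+1)) = g 1 - g (K+1) := by
  induction K with
  | zero => simp
  | succ K ih =>
      rw [Finset.sum_Icc_succ_top (by omega), ih]
      ring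


end helpers

set_option maxHeartbeats 1000000 in
/-- **Corollary 1 (eq. (16)):** under exactly the hypotheses of Theorem 1,
with `ε_i := (2−γ)/N`, for every `K ≥ 1` the averaged weighted squared
successive differences of the primal iterates satisfy
`(1/K)∑_{k=1}^K ½∑_i ‖x^{[k]}_i − x^{[k+1]}_i‖²_{ρA_iᵀA_i + P_i − (ρ/ε_i)A_iᵀA_i}
  ≤ C/K + E_Δ`. -/
theorem qdpjadmm_successive_differences
    (N m : ℕ) (hN : 2 ≤ N) (hm : 1 ≤ m)
    (n : Fin N → ℕ) (hn : ∀ i, 1 ≤ n i)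
    (A : ∀ i, Matrix (Fin m) (Fin (n i)) ℝ)
    (b : EuclideanSpace ℝ (Fin m))
    (f : ∀ i, EuclideanSpace ℝ (Fin (n i)) → ℝ)
    (hf : ∀ i, ConvexOn ℝ Set.univ (f i))
    (ρ γ Δ : ℝ) (hρ : 0 < ρ) (hγ₀ : 0 < γ) (hγ₂ : γ < 2) (hΔ : 0 < Δ)
    (P : ∀ i, Matrix (Fin (n i)) (Fin (n i)) ℝ)
    (hPsymm : ∀ i, (P i).IsSymm)
    (hPpsd : ∀ i,
      (P i - (ρ * ((N : ℝ) / (2 - γ) - 1) * specNorm (A i) ^ 2) • 1).PosSemidef)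
    (xs : ∀ i, EuclideanSpace ℝ (Fin (n i)))
    (lamStar : EuclideanSpace ℝ (Fin m))
    (hfeas : (∑ i, (show EuclideanSpace ℝ (Fin m) from WithLp.toLp 2 ((A i).mulVec (xs i)))) = b)
    (hsaddle : ∀ x : ∀ i, EuclideanSpace ℝ (Fin (n i)),
      Lag f A b xs lamStar ≤ Lag f A b x lamStar)
    (x : ℕ → ∀ i, EuclideanSpace ℝ (Fin (n i)))
    (lamHat dHat : ℕ → EuclideanSpace ℝ (Fin m))
    (Mlam Mx : ℝ) (hMlam : 0 ≤ Mlam) (hMx : 0 ≤ Mx)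
    (hd : ∀ k, 1 ≤ k →
      ‖dHat k - ((∑ i, (show EuclideanSpace ℝ (Fin m) from WithLp.toLp 2 ((A i).mulVec (x k i)))) - b)‖
        ≤ 2 * Real.sqrt m * Δ)
    (hdual : ∀ k, 1 ≤ k → lamHat (k + 1) = lamHat k + (γ * ρ) • dHat (k + 1))
    (hstat : ∀ k, 1 ≤ k → ∀ i, ∃ g : EuclideanSpace ℝ (Fin (n i)),
      (∀ z, f i (x (k + 1) i) + ⟪g, z - x (k + 1) i⟫ ≤ f i z) ∧
      g + gradTerm (A i) (P i) ρ (lamHat k) (dHat k) (x k i) (x (k + 1) i) = 0)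
    (hbdd : ∀ k, 1 ≤ k → ‖lamHat k - lamStar‖ ≤ Mlam ∧ ‖dHat k‖ ≤ Mx) :
    ∀ K : ℕ, 1 ≤ K →
      (K : ℝ)⁻¹ * ∑ k ∈ Finset.Icc 1 K,
          ((1 / 2) * ∑ i,
            wnormSq
              (ρ • ((A i).transpose * A i) + P i
                - (ρ / ((2 - γ) / (N : ℝ))) • ((A i).transpose * A i))
              (x k i - x (k + 1) i))
        ≤ ((1 / 2) * ∑ i, wnormSq (ρ • ((A i).transpose * A i) + P i) (x 1 i - xs i)
              + (1 / (2 * γ * ρ)) * ‖lamHat 1 - lamStar‖ ^ 2) / K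
          + ((8 / γ + 4 * |γ - 1| / γ + 2) * Real.sqrt m * Δ * Mlam
              + 4 * ρ * Real.sqrt m * Δ * Mx) := by
  have hN2 : (2:ℝ) ≤ (N:ℝ) := by exact_mod_cast hN
  have h2γ : (0:ℝ) < 2 - γ := by linarith
  have hNpos : (0:ℝ) < (N:ℝ) := by linarith
  have hγρ : (0:ℝ) < γ * ρ := mul_pos hγ₀ hρ
  set ε' : ℝ := (2 - γ) / (N:ℝ) with hε'
  have hε'pos : 0 < ε' := div_pos h2γ hNpos
  set EΔ : ℝ := (8 / γ + 4 * |γ - 1| / γ + 2) * Real.sqrt m * Δ * Mlam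
              + 4 * ρ * Real.sqrt m * Δ * Mx with hEΔ
  set r : ℕ → EuclideanSpace ℝ (Fin m) := fun j =>
    (∑ i, (show EuclideanSpace ℝ (Fin m) from WithLp.toLp 2 ((A i).mulVec (x j i)))) - b with hrdef
  set e : ℕ → EuclideanSpace ℝ (Fin m) := fun j => dHat j - r j with hedef
  set Mi : ∀ i, Matrix (Fin (n i)) (Fin (n i)) ℝ :=
    fun i => ρ • ((A i).transpose * A i) + P i with hMi
  set V : ℕ → ℝ := fun j =>
    (1 / 2) * ∑ i, wnormSq (Mi i) (x j i - xs i)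
      + (1 / (2 * γ * ρ)) * ‖lamHat j - lamStar‖ ^ 2 with hV
  -- symmetry of Mi
  have hMiSymm : ∀ i, (Mi i).IsSymm := by
    intro i
    simp only [hMi]
    unfold Matrix.IsSymm
    rw [Matrix.transpose_add, Matrix.transpose_smul, Matrix.transpose_mul,
      Matrix.transpose_transpose, (hPsymm i)]
  -- nonnegativity of wnormSq (Mi i)
  have hMinn : ∀ i (v : EuclideanSpace ℝ (Fin (n i))), 0 ≤ wnormSq (Mi i) v := by
    intro i v
    have hsplit : wnormSq (Mi i) v
        = ρ * ‖(show EuclideanSpace ℝ (Fin m) from WithLp.toLp 2 ((A i).mulVec v))‖ ^ 2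
          + wnormSq (P i) v := by
      simp only [hMi]
      rw [wnormSq_add, wnormSq_smul, wnormSq_tmul]
    set c : ℝ := ρ * ((N : ℝ) / (2 - γ) - 1) * specNorm (A i) ^ 2 with hc
    have hcnn : 0 ≤ c := by
      have h1 : (1:ℝ) ≤ (N:ℝ) / (2 - γ) := by
        rw [le_div_iff₀ h2γ]
        linarith
      have h2 : (0:ℝ) ≤ specNorm (A i) ^ 2 := sq_nonneg _
      have : (0:ℝ) ≤ ρ * ((N : ℝ) / (2 - γ) - 1) := by nlinarith
      rw [hc]
      exact mul_nonneg this h2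
    have hpsd : (0:ℝ) ≤ dotProduct (v : Fin (n i) → ℝ) ((P i - c • 1).mulVec v) := by
      have h := (hPpsd i).dotProduct_mulVec_nonneg (v : Fin (n i) → ℝ)
      simpa using h
    have hP : wnormSq (P i - c • 1) v = wnormSq (P i) v - c * wnormSq 1 v := by
      rw [wnormSq_sub, wnormSq_smul]
    have h1v : wnormSq (1 : Matrix (Fin (n i)) (Fin (n i)) ℝ) v = ⟪v, v⟫ := by
      unfold wnormSq
      rw [Matrix.one_mulVec, dotP_inner]
    have hPv : (0:ℝ) ≤ wnormSq (P i - c • 1) v := hpsd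
    have hvv : (0:ℝ) ≤ ⟪v, v⟫ := real_inner_self_nonneg
    have hAv : (0:ℝ) ≤ ‖(show EuclideanSpace ℝ (Fin m) from WithLp.toLp 2 ((A i).mulVec v))‖ ^ 2 := sq_nonneg _
    have t1 : (0:ℝ) ≤ c * ⟪v, v⟫ := mul_nonneg hcnn hvv
    have t2 : (0:ℝ) ≤ ρ * ‖(show EuclideanSpace ℝ (Fin m) from WithLp.toLp 2 ((A i).mulVec v))‖ ^ 2 :=
      mul_nonneg hρ.le hAv
    rw [h1v] at hP
    rw [hsplit]
    linarith
  have hVnn : ∀ j, 0 ≤ V j := by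
    intro j
    simp only [hV]
    have h1 : (0:ℝ) ≤ ∑ i, wnormSq (Mi i) (x j i - xs i) :=
      Finset.sum_nonneg fun i _ => hMinn i _
    have h2 : (0:ℝ) ≤ ‖lamHat j - lamStar‖ ^ 2 := sq_nonneg _
    have h3 : (0:ℝ) ≤ 1 / (2 * γ * ρ) := by positivity
    exact add_nonneg (mul_nonneg (by norm_num) h1) (mul_nonneg h3 h2)
  -- the key per-iteration estimate
  have key : ∀ k, 1 ≤ k →
      (1 / 2) * ∑ i,
          wnormSq (ρ • ((A i).transpose * A i) + P i
              - (ρ / ε') • ((A i).transpose * A i)) (x k i - x (k + 1) i)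
        ≤ V k - V (k + 1) + EΔ := by
    intro k hk
    have hk1 : 1 ≤ k + 1 := by omega
    obtain ⟨hblam, hbd⟩ := hbdd k hk
    obtain ⟨hblam1, hbd1⟩ := hbdd (k + 1) hk1
    have hek1 : ‖e (k + 1)‖ ≤ 2 * Real.sqrt m * Δ := by
      have := hd (k + 1) hk1
      simpa only [hedef, hrdef] using this
    have hek : ‖e k‖ ≤ 2 * Real.sqrt m * Δ := by
      have := hd k hk
      simpa only [hedef, hrdef] using this
    choose g hg1 hg2 using hstat k hk
    have step1 : ∑ i, ⟪gradTerm (A i) (P i) ρ (lamHat k) (dHat k) (x k i) (x (k + 1) i),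
        x (k + 1) i - xs i⟫ ≤ ⟪lamStar, r (k + 1)⟫ := by
      have hsg : ∀ i, ⟪gradTerm (A i) (P i) ρ (lamHat k) (dHat k) (x k i) (x (k + 1) i),
          x (k + 1) i - xs i⟫ ≤ f i (xs i) - f i (x (k + 1) i) := by
        intro i
        have h1 := hg1 i (xs i)
        have h2 : g i = -gradTerm (A i) (P i) ρ (lamHat k) (dHat k) (x k i) (x (k + 1) i) :=
          eq_neg_of_add_eq_zero_left (hg2 i)
        have h3 : ⟪g i, xs i - x (k + 1) i⟫
            = ⟪gradTerm (A i) (P i) ρ (lamHat k) (dHat k) (x k i) (x (k + 1) i),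
                x (k + 1) i - xs i⟫ := by
          rw [h2, inner_neg_left,
            show xs i - x (k + 1) i = -(x (k + 1) i - xs i) from (neg_sub _ _).symm,
            inner_neg_right, neg_neg]
        linarith
      have hsum1 := Finset.sum_le_sum (fun i (_ : i ∈ Finset.univ) => hsg i)
      have hsad := hsaddle (x (k + 1))
      simp only [Lag] at hsad
      rw [hfeas, sub_self, inner_zero_right, add_zero] at hsad
      have hr1 : ((∑ i, (show EuclideanSpace ℝ (Fin m) from WithLp.toLp 2 ((A i).mulVec (x (k + 1) i)))) - b)
          = r (k + 1) := rfl
      rw [hr1] at hsad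
      have hfin : ∑ i, (f i (xs i) - f i (x (k + 1) i)) ≤ ⟪lamStar, r (k + 1)⟫ := by
        rw [Finset.sum_sub_distrib]
        linarith
      linarith
    have step2 : ∀ i, ⟪gradTerm (A i) (P i) ρ (lamHat k) (dHat k) (x k i) (x (k + 1) i),
        x (k + 1) i - xs i⟫
        = ⟪lamHat k, (show EuclideanSpace ℝ (Fin m) from WithLp.toLp 2 ((A i).mulVec (x (k + 1) i - xs i)))⟫
          + ρ * ⟪dHat k, (show EuclideanSpace ℝ (Fin m) from WithLp.toLp 2 ((A i).mulVec (x (k + 1) i - xs i)))⟫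
          + qf (Mi i) (x (k + 1) i - x k i) (x (k + 1) i - xs i) := by
      intro i
      unfold gradTerm
      change ⟪(show EuclideanSpace ℝ (Fin (n i)) from WithLp.toLp 2 ((A i).transpose.mulVec (lamHat k)))
          + ρ • (show EuclideanSpace ℝ (Fin (n i)) from WithLp.toLp 2 ((A i).transpose.mulVec
            (((show EuclideanSpace ℝ (Fin m) from WithLp.toLp 2 ((A i).mulVec
              ((x (k + 1) i - x k i : EuclideanSpace ℝ (Fin (n i))))))
              + dHat k : EuclideanSpace ℝ (Fin m)))))
          + (show EuclideanSpace ℝ (Fin (n i)) from WithLp.toLp 2 ((P i).mulVec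
            ((x (k + 1) i - x k i : EuclideanSpace ℝ (Fin (n i)))))),
          x (k + 1) i - xs i⟫ = _
      rw [inner_add_left, inner_add_left, real_inner_smul_left]
      rw [inner_tmulVec, inner_tmulVec, inner_PmulVec (hPsymm i)]
      rw [inner_add_left, ← qf_tmul]
      simp only [hMi]
      rw [qf_Madd, qf_Msmul]
      simp only [WithLp.ofLp_sub]
      ring
    have hAsum : (∑ i, (show EuclideanSpace ℝ (Fin m) from WithLp.toLp 2 ((A i).mulVec (x (k + 1) i - xs i))))
        = r (k + 1) := by
      rw [Finset.sum_congr rfl (fun i _ => emulVec_sub (A i) (x (k + 1) i) (xs i)),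
        Finset.sum_sub_distrib, hfeas]
    have step12 : ∑ i, qf (Mi i) (x (k + 1) i - x k i) (x (k + 1) i - xs i)
        + ⟪lamHat k - lamStar, r (k + 1)⟫ + ρ * ⟪dHat k, r (k + 1)⟫ ≤ 0 := by
      have h1 : ∑ i, ⟪gradTerm (A i) (P i) ρ (lamHat k) (dHat k) (x k i) (x (k + 1) i),
          x (k + 1) i - xs i⟫
          = ⟪lamHat k, r (k + 1)⟫ + ρ * ⟪dHat k, r (k + 1)⟫
            + ∑ i, qf (Mi i) (x (k + 1) i - x k i) (x (k + 1) i - xs i) := by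
        rw [Finset.sum_congr rfl (fun i _ => step2 i), Finset.sum_add_distrib,
          Finset.sum_add_distrib, ← Finset.mul_sum, ← inner_sum, ← inner_sum, hAsum]
      have h2 : ⟪lamHat k - lamStar, r (k + 1)⟫
          = ⟪lamHat k, r (k + 1)⟫ - ⟪lamStar, r (k + 1)⟫ := inner_sub_left _ _ _
      rw [h1] at step1
      linarith
    have h3p : ∑ i, qf (Mi i) (x (k + 1) i - x k i) (x (k + 1) i - xs i)
        = (1 / 2) * ∑ i, wnormSq (Mi i) (x (k + 1) i - x k i)
          + (1 / 2) * ∑ i, wnormSq (Mi i) (x (k + 1) i - xs i)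
          - (1 / 2) * ∑ i, wnormSq (Mi i) (x k i - xs i) := by
      rw [Finset.sum_congr rfl
        (fun i _ => qf_three_point (hMiSymm i) (x (k + 1) i) (x k i) (xs i))]
      rw [Finset.mul_sum, Finset.mul_sum, Finset.mul_sum, ← Finset.sum_add_distrib,
        ← Finset.sum_sub_distrib]
      exact Finset.sum_congr rfl fun i _ => by ring
    have hreq : r (k + 1) = dHat (k + 1) - e (k + 1) := by
      simp only [hedef]
      abel
    have hlamdiff : lamHat (k + 1) - lamStar - (lamHat k - lamStar)
        = (γ * ρ) • dHat (k + 1) := by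
      rw [hdual k hk]
      abel
    have hpol := inner_self_diff (lamHat k - lamStar) (lamHat (k + 1) - lamStar)
    rw [hlamdiff, real_inner_smul_right] at hpol
    have hnsmul : ‖(γ * ρ) • dHat (k + 1)‖ ^ 2 = (γ * ρ) ^ 2 * ‖dHat (k + 1)‖ ^ 2 := by
      rw [norm_smul, Real.norm_eq_abs, abs_of_pos hγρ, mul_pow]
    rw [hnsmul] at hpol
    have hne : γ * ρ ≠ 0 := ne_of_gt hγρ
    have h4 : ⟪lamHat k - lamStar, r (k + 1)⟫
        = 1 / (2 * γ * ρ) * (‖lamHat (k + 1) - lamStar‖ ^ 2 - ‖lamHat k - lamStar‖ ^ 2)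
          - γ * ρ / 2 * ‖dHat (k + 1)‖ ^ 2 - ⟪lamHat k - lamStar, e (k + 1)⟫ := by
      rw [hreq, inner_sub_right]
      have hx : ⟪lamHat k - lamStar, dHat (k + 1)⟫
          = 1 / (2 * γ * ρ) * (‖lamHat (k + 1) - lamStar‖ ^ 2 - ‖lamHat k - lamStar‖ ^ 2)
            - γ * ρ / 2 * ‖dHat (k + 1)‖ ^ 2 := by
        have e1 : ⟪lamHat k - lamStar, dHat (k + 1)⟫
            = (γ * ρ)⁻¹ * (γ * ρ * ⟪lamHat k - lamStar, dHat (k + 1)⟫) :=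
          (inv_mul_cancel_left₀ hne _).symm
        rw [e1, hpol]
        have hγne : γ ≠ 0 := ne_of_gt hγ₀
        have hρne : ρ ≠ 0 := ne_of_gt hρ
        field_simp
      rw [hx]
    have hs : (∑ i, (show EuclideanSpace ℝ (Fin m) from WithLp.toLp 2 ((A i).mulVec (x (k + 1) i - x k i))))
        = r (k + 1) - r k := by
      rw [Finset.sum_congr rfl (fun i _ => emulVec_sub (A i) (x (k + 1) i) (x k i)),
        Finset.sum_sub_distrib]
      simp only [hrdef]
      abel
    have hdk : dHat k = dHat (k + 1)
        - (∑ i, (show EuclideanSpace ℝ (Fin m) from WithLp.toLp 2 ((A i).mulVec (x (k + 1) i - x k i))))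
        - (e (k + 1) - e k) := by
      rw [hs]
      simp only [hedef]
      abel
    have h5 : ⟪dHat k, dHat (k + 1)⟫
        = ‖dHat (k + 1)‖ ^ 2
          - ⟪(∑ i, (show EuclideanSpace ℝ (Fin m) from WithLp.toLp 2 ((A i).mulVec (x (k + 1) i - x k i)))),
              dHat (k + 1)⟫
          - ⟪e (k + 1) - e k, dHat (k + 1)⟫ := by
      conv_lhs => rw [hdk]
      rw [inner_sub_left, inner_sub_left, real_inner_self_eq_norm_sq]
    have h5r : ⟪dHat k, r (k + 1)⟫ = ⟪dHat k, dHat (k + 1)⟫ - ⟪dHat k, e (k + 1)⟫ := by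
      rw [hreq, inner_sub_right]
    have h6 : ⟪(∑ i, (show EuclideanSpace ℝ (Fin m) from WithLp.toLp 2 ((A i).mulVec (x (k + 1) i - x k i)))),
        dHat (k + 1)⟫
        ≤ 1 / 2 * (1 / ε') * ∑ i,
            ‖(show EuclideanSpace ℝ (Fin m) from WithLp.toLp 2 ((A i).mulVec (x (k + 1) i - x k i)))‖ ^ 2
          + (2 - γ) / 2 * ‖dHat (k + 1)‖ ^ 2 := by
      rw [sum_inner]
      have hle := Finset.sum_le_sum (fun i (_ : i ∈ Finset.univ) =>
        young_inner (show EuclideanSpace ℝ (Fin m) from WithLp.toLp 2 ((A i).mulVec (x (k + 1) i - x k i)))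
          (dHat (k + 1)) hε'pos)
      have heq : ∑ i : Fin N, (1 / 2 * (1 / ε') *
            ‖(show EuclideanSpace ℝ (Fin m) from WithLp.toLp 2 ((A i).mulVec (x (k + 1) i - x k i)))‖ ^ 2
            + ε' / 2 * ‖dHat (k + 1)‖ ^ 2)
          = 1 / 2 * (1 / ε') * ∑ i,
              ‖(show EuclideanSpace ℝ (Fin m) from WithLp.toLp 2 ((A i).mulVec (x (k + 1) i - x k i)))‖ ^ 2
            + (2 - γ) / 2 * ‖dHat (k + 1)‖ ^ 2 := by
        rw [Finset.sum_add_distrib, ← Finset.mul_sum, Finset.sum_const, Finset.card_univ,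
          Fintype.card_fin, nsmul_eq_mul]
        have hc : (N : ℝ) * (ε' / 2 * ‖dHat (k + 1)‖ ^ 2)
            = (2 - γ) / 2 * ‖dHat (k + 1)‖ ^ 2 := by
          rw [hε']
          field_simp
        rw [hc]
      rw [← heq]
      exact hle
    have hsqm : (0:ℝ) ≤ Real.sqrt m := Real.sqrt_nonneg _
    have hE1 : ⟪lamHat k - lamStar, e (k + 1)⟫ ≤ Mlam * (2 * Real.sqrt m * Δ) :=
      le_trans (real_inner_le_norm _ _)
        (mul_le_mul hblam hek1 (norm_nonneg _) hMlam)
    have hE2 : ρ * ⟪dHat k, e (k + 1)⟫ ≤ ρ * (Mx * (2 * Real.sqrt m * Δ)) := by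
      apply mul_le_mul_of_nonneg_left _ hρ.le
      exact le_trans (real_inner_le_norm _ _) (mul_le_mul hbd hek1 (norm_nonneg _) hMx)
    have hE3 : ρ * ⟪e (k + 1) - e k, dHat (k + 1)⟫
        ≤ 1 / γ * (4 * Real.sqrt m * Δ * (2 * Mlam)) := by
      have h1 : γ * ρ * ⟪e (k + 1) - e k, dHat (k + 1)⟫
          = ⟪e (k + 1) - e k, lamHat (k + 1) - lamHat k⟫ := by
        rw [← real_inner_smul_right, hdual k hk]
        congr 1
        abel
      have h2 : ⟪e (k + 1) - e k, lamHat (k + 1) - lamHat k⟫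
          ≤ 4 * Real.sqrt m * Δ * (2 * Mlam) := by
        refine le_trans (real_inner_le_norm _ _)
          (mul_le_mul ?_ ?_ (norm_nonneg _) (by positivity))
        · calc ‖e (k + 1) - e k‖ ≤ ‖e (k + 1)‖ + ‖e k‖ := norm_sub_le _ _
            _ ≤ 4 * Real.sqrt m * Δ := by linarith
        · have hde : lamHat (k + 1) - lamHat k
              = (lamHat (k + 1) - lamStar) - (lamHat k - lamStar) := by abel
          rw [hde]
          calc ‖(lamHat (k + 1) - lamStar) - (lamHat k - lamStar)‖
              ≤ ‖lamHat (k + 1) - lamStar‖ + ‖lamHat k - lamStar‖ := norm_sub_le _ _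
            _ ≤ 2 * Mlam := by linarith
      have h3 : ρ * ⟪e (k + 1) - e k, dHat (k + 1)⟫
          = 1 / γ * (γ * ρ * ⟪e (k + 1) - e k, dHat (k + 1)⟫) := by
        rw [show 1 / γ * (γ * ρ * ⟪e (k + 1) - e k, dHat (k + 1)⟫)
            = (1 / γ * γ) * (ρ * ⟪e (k + 1) - e k, dHat (k + 1)⟫) from by ring,
          one_div_mul_cancel (ne_of_gt hγ₀), one_mul]
      rw [h3, h1]
      exact mul_le_mul_of_nonneg_left h2 (by positivity)
    have h5r' : ρ * ⟪dHat k, r (k + 1)⟫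
        = ρ * ⟪dHat k, dHat (k + 1)⟫ - ρ * ⟪dHat k, e (k + 1)⟫ := by
      rw [h5r]; ring
    have h5' : ρ * ⟪dHat k, dHat (k + 1)⟫
        = ρ * ‖dHat (k + 1)‖ ^ 2
          - ρ * ⟪(∑ i, (show EuclideanSpace ℝ (Fin m) from WithLp.toLp 2 ((A i).mulVec (x (k + 1) i - x k i)))),
              dHat (k + 1)⟫
          - ρ * ⟪e (k + 1) - e k, dHat (k + 1)⟫ := by
      rw [h5]; ring
    have h6' : ρ * ⟪(∑ i, (show EuclideanSpace ℝ (Fin m) from WithLp.toLp 2 ((A i).mulVec (x (k + 1) i - x k i)))),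
        dHat (k + 1)⟫
        ≤ ρ * (1 / 2 * (1 / ε') * ∑ i,
            ‖(show EuclideanSpace ℝ (Fin m) from WithLp.toLp 2 ((A i).mulVec (x (k + 1) i - x k i)))‖ ^ 2
          + (2 - γ) / 2 * ‖dHat (k + 1)‖ ^ 2) := mul_le_mul_of_nonneg_left h6 hρ.le
    have hQ : ∀ i, wnormSq (ρ • ((A i).transpose * A i) + P i
          - (ρ / ε') • ((A i).transpose * A i)) (x k i - x (k + 1) i)
        = wnormSq (Mi i) (x (k + 1) i - x k i)
          - ρ / ε' * ‖(show EuclideanSpace ℝ (Fin m) from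
              WithLp.toLp 2 ((A i).mulVec (x (k + 1) i - x k i)))‖ ^ 2 := by
      intro i
      rw [wnormSq_neg, wnormSq_sub, wnormSq_smul, wnormSq_tmul]
      rfl
    have hgoal : (1 / 2) * ∑ i, wnormSq (ρ • ((A i).transpose * A i) + P i
          - (ρ / ε') • ((A i).transpose * A i)) (x k i - x (k + 1) i)
        = (1 / 2) * ∑ i, wnormSq (Mi i) (x (k + 1) i - x k i)
          - 1 / 2 * (ρ / ε') * ∑ i, ‖(show EuclideanSpace ℝ (Fin m) from
              WithLp.toLp 2 ((A i).mulVec (x (k + 1) i - x k i)))‖ ^ 2 := by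
      rw [Finset.sum_congr rfl (fun i _ => hQ i), Finset.sum_sub_distrib, ← Finset.mul_sum]
      ring
    rw [hgoal]
    simp only [hV]
    have hslack1 : (0:ℝ) ≤ 4 * |γ - 1| / γ * Real.sqrt m * Δ * Mlam := by
      have t1 : (0:ℝ) ≤ 4 * |γ - 1| / γ := by positivity
      exact mul_nonneg (mul_nonneg (mul_nonneg t1 hsqm) hΔ.le) hMlam
    have hslack2 : (0:ℝ) ≤ ρ * (Mx * (2 * Real.sqrt m * Δ)) := by
      have t1 : (0:ℝ) ≤ Mx * (2 * Real.sqrt m * Δ) := mul_nonneg hMx (by positivity)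
      exact mul_nonneg hρ.le t1
    simp only [hEΔ]
    have hS3 : (∑ i, qf (Mi i) (x (k + 1) i - x k i) (x (k + 1) i - xs i))
        ≤ 1 / (2 * γ * ρ) * (‖lamHat k - lamStar‖ ^ 2 - ‖lamHat (k + 1) - lamStar‖ ^ 2)
          + ρ * (1 / 2 * (1 / ε') * ∑ i, ‖(show EuclideanSpace ℝ (Fin m) from
              WithLp.toLp 2 ((A i).mulVec (x (k + 1) i - x k i)))‖ ^ 2)
          + ⟪lamHat k - lamStar, e (k + 1)⟫ + ρ * ⟪e (k + 1) - e k, dHat (k + 1)⟫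
          + ρ * ⟪dHat k, e (k + 1)⟫ := by
      linarith [step12, h4, h5r', h5', h6']
    ring_nf at h3p hS3 hE1 hE2 hE3 hslack1 hslack2 ⊢
    linarith [h3p, hS3, hE1, hE2, hE3, hslack1, hslack2]

  intro K hK
  have hKpos : (0:ℝ) < (K:ℝ) := by exact_mod_cast Nat.lt_of_lt_of_le Nat.zero_lt_one hK
  have hsum : ∑ k ∈ Finset.Icc 1 K,
      ((1 / 2) * ∑ i,
          wnormSq (ρ • ((A i).transpose * A i) + P i
              - (ρ / ε') • ((A i).transpose * A i)) (x k i - x (k + 1) i))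
      ≤ ∑ k ∈ Finset.Icc 1 K, (V k - V (k + 1) + EΔ) := by
    refine Finset.sum_le_sum fun k hk => ?_
    exact key k (Finset.mem_Icc.mp hk).1
  have htel : ∑ k ∈ Finset.Icc 1 K, (V k - V (k + 1) + EΔ)
      = V 1 - V (K + 1) + (K : ℝ) * EΔ := by
    rw [Finset.sum_add_distrib, telescope V K, Finset.sum_const, Nat.card_Icc]
    simp only [nsmul_eq_mul]
    push_cast
    ring
  have hmain : (K : ℝ)⁻¹ * ∑ k ∈ Finset.Icc 1 K,
      ((1 / 2) * ∑ i,
          wnormSq (ρ • ((A i).transpose * A i) + P i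
              - (ρ / ε') • ((A i).transpose * A i)) (x k i - x (k + 1) i))
      ≤ V 1 / (K : ℝ) + EΔ := by
    have h1 : (K : ℝ)⁻¹ * ∑ k ∈ Finset.Icc 1 K,
        ((1 / 2) * ∑ i,
            wnormSq (ρ • ((A i).transpose * A i) + P i
                - (ρ / ε') • ((A i).transpose * A i)) (x k i - x (k + 1) i))
        ≤ (K : ℝ)⁻¹ * (V 1 - V (K + 1) + (K : ℝ) * EΔ) := by
      apply mul_le_mul_of_nonneg_left _ (by positivity)
      rw [← htel]
      exact hsum
    have h2 : (K : ℝ)⁻¹ * (V 1 - V (K + 1) + (K : ℝ) * EΔ)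
        ≤ (K : ℝ)⁻¹ * (V 1 + (K : ℝ) * EΔ) := by
      apply mul_le_mul_of_nonneg_left _ (by positivity)
      linarith [hVnn (K + 1)]
    have h3 : (K : ℝ)⁻¹ * (V 1 + (K : ℝ) * EΔ) = V 1 / (K : ℝ) + EΔ := by
      field_simp
    linarith
  have hV1 : V 1 = (1 / 2) * ∑ i, wnormSq (ρ • ((A i).transpose * A i) + P i) (x 1 i - xs i)
      + (1 / (2 * γ * ρ)) * ‖lamHat 1 - lamStar‖ ^ 2 := by
    simp only [hV, hMi]
  rw [← hV1]
  exact hmain
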